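/- Radon transform intertwines directional derivatives: Let f : ℝ^p → ℝ be continuously differentiable with compact support. Then for every unit vector θ = (θ₁, …, θ_p) ∈ ℝ^p, every orthonormal basis {θ, e₁, …, e_{p−1}} of ℝ^p extending θ, every coordinate index j ∈ {1, …, p} and every u ∈ ℝ, the function u ↦ R(f)(θ, u) is differentiable and R(∂f/∂z_j)(θ, u) = θ_j · (∂/∂u) R(f)(θ, u). -/

import Mathlib

open MeasureTheory

/-- The Radon transform of `f : ℝ^p → ℝ` along the direction `θ`, using the orthonormal
family `e` completing `θ` to a basis. -/
noncomputable def radon (p : ℕ) (f : EuclideanSpace ℝ (Fin p) → ℝ)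
    (θ : EuclideanSpace ℝ (Fin p)) (e : Fin (p - 1) → EuclideanSpace ℝ (Fin p)) (u : ℝ) : ℝ :=
  ∫ s : EuclideanSpace ℝ (Fin (p - 1)), f (u • θ + ∑ j, s j • e j)

open scoped RealInnerProductSpace

/-- The integral over `ℝ^n` of a directional derivative of a `C¹` compactly supported
function vanishes. -/
lemma aux_integral_fderiv_eq_zero {n : ℕ} {h : EuclideanSpace ℝ (Fin n) → ℝ}
    (hh : ContDiff ℝ 1 h) (hc : HasCompactSupport h) (v : EuclideanSpace ℝ (Fin n)) :
    ∫ s, fderiv ℝ h s v = 0 := by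
  have hdiff : Differentiable ℝ h := hh.differentiable one_ne_zero
  have hcont : Continuous fun s => fderiv ℝ h s v :=
    (hh.continuous_fderiv one_ne_zero).clm_apply continuous_const
  have hcs : HasCompactSupport fun s => fderiv ℝ h s v := by
    have : HasCompactSupport ((fun L : EuclideanSpace ℝ (Fin n) →L[ℝ] ℝ => L v) ∘ fderiv ℝ h) :=
      (hc.fderiv ℝ).comp_left (by simp)
    exact this
  have hint1 : Integrable (fun s => fderiv ℝ h s v) volume :=
    hcont.integrable_of_hasCompactSupport hcs
  have hint2 : Integrable h volume := hh.continuous.integrable_of_hasCompactSupport hc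
  have key := integral_mul_fderiv_eq_neg_fderiv_mul_of_integrable (μ := volume)
    (f := fun _ : EuclideanSpace ℝ (Fin n) => (1 : ℝ)) (g := h) (v := v)
    (by simpa using (integrable_zero _ ℝ (volume : Measure (EuclideanSpace ℝ (Fin n)))))
    (by simpa using hint1) (by simpa using hint2)
    (fun x _ => differentiableAt_const 1) (fun x _ => hdiff x)
  simpa using key

/-- The Radon transform intertwines directional derivatives: for `f` continuously
differentiable with compact support, the slice `u ↦ R(f)(θ, u)` is differentiable and
`R(∂f/∂z_j)(θ, u) = θ_j ⬝ (∂/∂u) R(f)(θ, u)`. -/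
theorem radon_intertwines_derivatives (p : ℕ) (hp : 1 ≤ p)
    (f : EuclideanSpace ℝ (Fin p) → ℝ)
    (hf : ContDiff ℝ 1 f) (hsupp : HasCompactSupport f)
    (θ : EuclideanSpace ℝ (Fin p)) (hθ : ‖θ‖ = 1)
    (e : Fin (p - 1) → EuclideanSpace ℝ (Fin p))
    (horth : Orthonormal ℝ (Sum.elim (fun _ : Unit => θ) e))
    (hspan : Submodule.span ℝ (Set.range (Sum.elim (fun _ : Unit => θ) e)) = ⊤)
    (j : Fin p) (u : ℝ) :
    DifferentiableAt ℝ (radon p f θ e) u ∧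
      radon p (fun z => fderiv ℝ f z (EuclideanSpace.single j 1)) θ e u =
        θ j * deriv (radon p f θ e) u := by
  classical
  have hfd : Differentiable ℝ f := hf.differentiable one_ne_zero
  have hfc : Continuous f := hf.continuous
  have hfder_cont : Continuous (fderiv ℝ f) := hf.continuous_fderiv one_ne_zero
  -- the linear isometry `s ↦ ∑ k, s k • e k`
  set L : EuclideanSpace ℝ (Fin (p - 1)) →L[ℝ] EuclideanSpace ℝ (Fin p) :=
    ∑ k : Fin (p - 1), (EuclideanSpace.proj k).smulRight (e k) with hLdef
  have hL : ∀ s : EuclideanSpace ℝ (Fin (p - 1)), L s = ∑ k, s k • e k := by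
    intro s
    simp [hLdef, ContinuousLinearMap.sum_apply]
  have he : Orthonormal ℝ e := by
    have := horth.comp Sum.inr Sum.inr_injective
    simpa using this
  have hLnorm : ∀ s : EuclideanSpace ℝ (Fin (p - 1)), ‖L s‖ = ‖s‖ := by
    intro s
    have h1 : ⟪L s, L s⟫ = ∑ k, s k * s k := by
      rw [hL]
      simpa using he.inner_sum s s Finset.univ
    have h2 : ⟪s, s⟫ = ∑ k, s k * s k := by
      simp [real_inner_comm, PiLp.inner_apply, RCLike.inner_apply]
      rw [EuclideanSpace.norm_sq_eq]; simp [Real.norm_eq_abs, sq]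
    have := congrArg Real.sqrt (h1.trans h2.symm)
    rwa [real_inner_self_eq_norm_sq, real_inner_self_eq_norm_sq, Real.sqrt_sq (norm_nonneg _),
      Real.sqrt_sq (norm_nonneg _)] at this
  obtain ⟨R, hR⟩ := hsupp.isCompact.isBounded.subset_closedBall 0
  obtain ⟨C, hC⟩ := (hsupp.fderiv ℝ).exists_bound_of_continuous hfder_cont
  -- support estimate
  have hsub : ∀ (g : EuclideanSpace ℝ (Fin p) → ℝ),
      (Function.support g ⊆ Metric.closedBall 0 R) → ∀ x : ℝ,
      Function.support (fun s : EuclideanSpace ℝ (Fin (p - 1)) => g (x • θ + L s)) ⊆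
        Metric.closedBall 0 (R + |x|) := by
    intro g hg x s hs
    have h1 : x • θ + L s ∈ Metric.closedBall 0 R := hg hs
    simp only [Metric.mem_closedBall, dist_zero_right] at h1 ⊢
    have h2 : ‖x • θ‖ = |x| := by rw [norm_smul, hθ, Real.norm_eq_abs, mul_one]
    calc ‖s‖ = ‖L s‖ := (hLnorm s).symm
      _ = ‖(x • θ + L s) - x • θ‖ := by congr 1; abel
      _ ≤ ‖x • θ + L s‖ + ‖x • θ‖ := norm_sub_le _ _
      _ ≤ R + |x| := by rw [h2]; exact add_le_add_left h1 _
  have hcsupp : ∀ (g : EuclideanSpace ℝ (Fin p) → ℝ),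
      (Function.support g ⊆ Metric.closedBall 0 R) → ∀ x : ℝ,
      HasCompactSupport (fun s : EuclideanSpace ℝ (Fin (p - 1)) => g (x • θ + L s)) := by
    intro g hg x
    apply HasCompactSupport.intro (isCompact_closedBall (0 : EuclideanSpace ℝ (Fin (p - 1)))
      (R + |x|))
    intro s hs
    by_contra hne
    exact hs (hsub g hg x hne)
  have hint : ∀ (g : EuclideanSpace ℝ (Fin p) → ℝ), Continuous g →
      (Function.support g ⊆ Metric.closedBall 0 R) → ∀ x : ℝ,
      Integrable (fun s : EuclideanSpace ℝ (Fin (p - 1)) => g (x • θ + L s)) volume := by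
    intro g hgc hg x
    exact (hgc.comp (continuous_const.add L.continuous)).integrable_of_hasCompactSupport
      (hcsupp g hg x)
  have hsuppf : Function.support f ⊆ Metric.closedBall 0 R :=
    subset_trans (subset_closure) hR
  have hsuppf' : ∀ w : EuclideanSpace ℝ (Fin p),
      Function.support (fun z => fderiv ℝ f z w) ⊆ Metric.closedBall 0 R := by
    intro w z hz
    have : fderiv ℝ f z ≠ 0 := by
      intro h0
      apply hz
      simp [h0]
    exact hR ((support_fderiv_subset ℝ) this)
  have hcontw : ∀ w : EuclideanSpace ℝ (Fin p),
      Continuous (fun z => fderiv ℝ f z w) := fun w =>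
    hfder_cont.clm_apply continuous_const
  have hintw : ∀ (x : ℝ) (w : EuclideanSpace ℝ (Fin p)),
      Integrable (fun s : EuclideanSpace ℝ (Fin (p - 1)) =>
        fderiv ℝ f (x • θ + L s) w) volume := fun x w =>
    hint _ (hcontw w) (hsuppf' w) x
  -- pointwise derivative in `u`
  have hderiv_u : ∀ (x : ℝ) (s : EuclideanSpace ℝ (Fin (p - 1))),
      HasDerivAt (fun y : ℝ => f (y • θ + L s)) (fderiv ℝ f (x • θ + L s) θ) x := by
    intro x s
    have h1 : HasDerivAt (fun y : ℝ => y • θ + L s) θ x := by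
      simpa using ((hasDerivAt_id x).smul_const θ).add_const (L s)
    exact (hfd _).hasFDerivAt.comp_hasDerivAt x h1
  -- the Radon transform as an integral against `L`
  have hradon : radon p f θ e = fun x : ℝ =>
      ∫ s : EuclideanSpace ℝ (Fin (p - 1)), f (x • θ + L s) := by
    funext x
    unfold radon
    congr 1
    funext s
    rw [hL]
  -- differentiation under the integral sign
  have key : HasDerivAt (radon p f θ e)
      (∫ s : EuclideanSpace ℝ (Fin (p - 1)), fderiv ℝ f (u • θ + L s) θ) u := by
    rw [hradon]
    have main := hasDerivAt_integral_of_dominated_loc_of_deriv_le (μ := volume)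
      (F := fun (x : ℝ) (s : EuclideanSpace ℝ (Fin (p - 1))) => f (x • θ + L s))
      (F' := fun (x : ℝ) (s : EuclideanSpace ℝ (Fin (p - 1))) => fderiv ℝ f (x • θ + L s) θ)
      (x₀ := u) (s := Metric.ball u 1)
      (bound := (Metric.closedBall (0 : EuclideanSpace ℝ (Fin (p - 1)))
        (R + |u| + 1)).indicator (fun _ => C))
      (Metric.ball_mem_nhds u one_pos)
      (Filter.Eventually.of_forall fun x =>
        ((hfc.comp (continuous_const.add L.continuous)).aestronglyMeasurable))
      (hint f hfc hsuppf u)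
      (((hcontw θ).comp (continuous_const.add L.continuous)).aestronglyMeasurable)
      ?_ ?_
      (Filter.Eventually.of_forall fun s x _ => hderiv_u x s)
    · exact main.2
    · -- bound
      refine Filter.Eventually.of_forall fun s => fun x hx => ?_
      by_cases hs : s ∈ Metric.closedBall (0 : EuclideanSpace ℝ (Fin (p - 1))) (R + |u| + 1)
      · rw [Set.indicator_of_mem hs]
        calc ‖fderiv ℝ f (x • θ + L s) θ‖ ≤ ‖fderiv ℝ f (x • θ + L s)‖ * ‖θ‖ :=
              (fderiv ℝ f (x • θ + L s)).le_opNorm θ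
          _ = ‖fderiv ℝ f (x • θ + L s)‖ := by rw [hθ, mul_one]
          _ ≤ C := hC _
      · rw [Set.indicator_of_notMem hs]
        have hxu : |x| ≤ |u| + 1 := by
          have : |x - u| < 1 := by
            rw [← Real.dist_eq]
            exact Metric.mem_ball.1 hx
          calc |x| = |x - u + u| := by ring_nf
            _ ≤ |x - u| + |u| := abs_add_le _ _
            _ ≤ |u| + 1 := by linarith
        have hzero : fderiv ℝ f (x • θ + L s) θ = 0 := by
          by_contra hne
          apply hs
          have := hsub (fun z => fderiv ℝ f z θ) (hsuppf' θ) x hne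
          simp only [Metric.mem_closedBall, dist_zero_right] at this ⊢
          linarith
        simp [hzero]
    · -- bound integrable
      rw [integrable_indicator_iff measurableSet_closedBall]
      exact integrableOn_const (measure_closedBall_lt_top).ne
  have hderiv : deriv (radon p f θ e) u =
      ∫ s : EuclideanSpace ℝ (Fin (p - 1)), fderiv ℝ f (u • θ + L s) θ := key.deriv
  refine ⟨key.differentiableAt, ?_⟩
  -- the orthonormal basis of ℝ^p
  set b : OrthonormalBasis (Unit ⊕ Fin (p - 1)) ℝ (EuclideanSpace ℝ (Fin p)) :=
    OrthonormalBasis.mk horth (le_of_eq hspan.symm) with hbdef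
  have hb : ⇑b = Sum.elim (fun _ : Unit => θ) e := OrthonormalBasis.coe_mk _ _
  -- expansion of `single j 1`
  have hsingle : (EuclideanSpace.single j (1 : ℝ)) =
      θ j • θ + ∑ k, e k j • e k := by
    have h1 := b.sum_repr' (EuclideanSpace.single j (1 : ℝ))
    rw [Fintype.sum_sum_type] at h1
    simp only [hb, Sum.elim_inl, Sum.elim_inr] at h1
    have h2 : ∀ v : EuclideanSpace ℝ (Fin p),
        ⟪v, EuclideanSpace.single j (1 : ℝ)⟫ = v j := by
      intro v
      simpa using EuclideanSpace.inner_single_right (𝕜 := ℝ) j 1 v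
    rw [← h1]
    simp [h2]
  -- the vanishing of the tangential derivatives
  have hvanish : ∀ k : Fin (p - 1),
      (∫ s : EuclideanSpace ℝ (Fin (p - 1)), fderiv ℝ f (u • θ + L s) (e k)) = 0 := by
    intro k
    set h : EuclideanSpace ℝ (Fin (p - 1)) → ℝ := fun s => f (u • θ + L s) with hhdef
    have hhc : ContDiff ℝ 1 h := hf.comp (contDiff_const.add L.contDiff)
    have hhs : HasCompactSupport h := hcsupp f hsuppf u
    have hfderh : ∀ s, fderiv ℝ h s = (fderiv ℝ f (u • θ + L s)).comp L := by
      intro s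
      have h1 : HasFDerivAt (fun s' : EuclideanSpace ℝ (Fin (p - 1)) => u • θ + L s') L s :=
        L.hasFDerivAt.const_add (u • θ)
      exact ((hfd _).hasFDerivAt.comp s h1).fderiv
    have hek : L (EuclideanSpace.single k (1 : ℝ)) = e k := by
      rw [hL]
      have : ∀ i : Fin (p - 1), (EuclideanSpace.single k (1 : ℝ)) i • e i
          = if i = k then e i else 0 := by
        intro i
        rw [EuclideanSpace.single_apply]
        by_cases hik : i = k <;> simp [hik]
      rw [Finset.sum_congr rfl fun i _ => this i]
      simp
    have := aux_integral_fderiv_eq_zero hhc hhs (EuclideanSpace.single k (1 : ℝ))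
    rw [← this]
    congr 1
    funext s
    rw [hfderh s]
    simp [hek]
  -- put everything together
  have hradon' : radon p (fun z => fderiv ℝ f z (EuclideanSpace.single j 1)) θ e u =
      ∫ s : EuclideanSpace ℝ (Fin (p - 1)),
        fderiv ℝ f (u • θ + L s) (EuclideanSpace.single j 1) := by
    unfold radon
    congr 1
    funext s
    rw [hL]
  rw [hradon', hderiv]
  have hexp : ∀ s : EuclideanSpace ℝ (Fin (p - 1)),
      fderiv ℝ f (u • θ + L s) (EuclideanSpace.single j 1) =
        θ j * fderiv ℝ f (u • θ + L s) θ +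
          ∑ k, e k j * fderiv ℝ f (u • θ + L s) (e k) := by
    intro s
    conv_lhs => rw [hsingle]
    simp [map_add, _root_.map_smul, map_sum, smul_eq_mul]
  rw [integral_congr_ae (Filter.Eventually.of_forall hexp)]
  rw [integral_add ((hintw u θ).const_mul _) (integrable_finset_sum _ fun k _ =>
    (hintw u (e k)).const_mul _)]
  rw [integral_finset_sum _ fun k _ => (hintw u (e k)).const_mul _]
  rw [integral_const_mul]
  have : ∀ k : Fin (p - 1), (∫ s : EuclideanSpace ℝ (Fin (p - 1)),
      e k j * fderiv ℝ f (u • θ + L s) (e k)) = 0 := by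
    intro k
    rw [integral_const_mul, hvanish k, mul_zero]
  rw [Finset.sum_congr rfl fun k _ => this k]
  simp
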